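/- arXiv:1910.12226 — 2 statements merged into one kernel-verified Lean document; each statement's English description precedes it below -/
import Mathlib

section
/- For each n ∈ ℕ let A_n be a symmetric (0,2)-tensor field on P_n, and assume that for every n ∈ ℕ and each scalar patched Markov embedding G_n : P_n → P_{n+1}, the pullback of A_{n+1} by G_n equals A_n. Then for every permutation σ of Ω_3, all α, u ∈ (0,1), and every W_{σ(3)} ∈ E^{σ(3)} decomposed as W_{σ(3)} = W_{σ(1)} + W_{σ(2)} with W_{σ(1)} ∈ E^{σ(1)}, W_{σ(2)} ∈ E^{σ(2)}, one has A_2(W_{σ(3)}, W_{σ(1)})_{ψ_u^σ(α)} = A_2(W_{σ(3)}, W_{σ(2)})_{ψ_{1−u}^σ(α)}. -/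
open Finset

noncomputable section

/-- `Psim n` is the space `P_n` of positive probability measures on
`Ω_{n+1} = {1,…,n+1}`, viewed as a subset of `ℝ^{n+1}`. -/
def Psim (n : ℕ) : Set (Fin (n + 1) → ℝ) :=
  {p | (∀ i, p i ∈ Set.Ioo (0 : ℝ) 1) ∧ ∑ i, p i = 1}

/-- The tangent space of `P_n` (at any point): vectors in `ℝ^{n+1}` whose
coordinates sum to zero. -/
def Tang (n : ℕ) : Set (Fin (n + 1) → ℝ) :=
  {X | ∑ i, X i = 0}

/-- `B` is a symmetric bilinear form on `ℝ^{n+1}` (the value of a symmetric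
`(0,2)`-tensor field at a point). -/
def IsSymmBilin {n : ℕ} (B : (Fin (n + 1) → ℝ) → (Fin (n + 1) → ℝ) → ℝ) : Prop :=
  (∀ X Y, B X Y = B Y X) ∧
  (∀ (c : ℝ) (X X' Y : Fin (n + 1) → ℝ), B (c • X + X') Y = c * B X Y + B X' Y)

/-- `A` is a family of symmetric `(0,2)`-tensor fields `A_n` on `P_n`
(indices `n ≥ 1`, matching the paper's `ℕ = {1,2,…}`). -/
def SymmTF (A : (n : ℕ) → (Fin (n + 1) → ℝ) → (Fin (n + 1) → ℝ) → (Fin (n + 1) → ℝ) → ℝ) :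
    Prop :=
  ∀ n : ℕ, 0 < n → ∀ p ∈ Psim n, IsSymmBilin (A n p)

/-- The scalar patched Markov embedding `G_n^{α,σ} : P_n → P_{n+1}`,
`G_n^{α,σ}(p) = α ∑_{i ∈ Ω_{n+1}} p(i) δ_{σ(i)} + (1-α) δ_{σ(n+2)}`. -/
def sPatch (n : ℕ) (α : ℝ) (σ : Equiv.Perm (Fin (n + 2))) (p : Fin (n + 1) → ℝ) :
    Fin (n + 2) → ℝ := fun I =>
  α * ∑ i : Fin (n + 1), p i * (if σ i.castSucc = I then 1 else 0) +
    (1 - α) * (if σ (Fin.last (n + 1)) = I then 1 else 0)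

/-- The differential of `G_n^{α,σ}`: `dG(X) = α ∑_i X^i δ_{σ(i)}`. -/
def sPatchD (n : ℕ) (α : ℝ) (σ : Equiv.Perm (Fin (n + 2))) (X : Fin (n + 1) → ℝ) :
    Fin (n + 2) → ℝ := fun I =>
  α * ∑ i : Fin (n + 1), X i * (if σ i.castSucc = I then 1 else 0)

/-- A general patched Markov embedding `G_n : P_n → P_{n+1}` with weights `a_i`:
`G_n(p) = ∑_i p(i) (a_i δ_{σ(i)} + (1-a_i) δ_{σ(n+2)})`. -/
def patch (n : ℕ) (a : Fin (n + 1) → ℝ) (σ : Equiv.Perm (Fin (n + 2)))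
    (p : Fin (n + 1) → ℝ) : Fin (n + 2) → ℝ := fun I =>
  ∑ i : Fin (n + 1), p i * (a i * (if σ i.castSucc = I then 1 else 0) +
    (1 - a i) * (if σ (Fin.last (n + 1)) = I then 1 else 0))

/-- The differential of a patched Markov embedding. -/
def patchD (n : ℕ) (a : Fin (n + 1) → ℝ) (σ : Equiv.Perm (Fin (n + 2)))
    (X : Fin (n + 1) → ℝ) : Fin (n + 2) → ℝ := fun I =>
  ∑ i : Fin (n + 1), X i * (a i * (if σ i.castSucc = I then 1 else 0) +
    (1 - a i) * (if σ (Fin.last (n + 1)) = I then 1 else 0))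

/-- Invariance of the family `{A_n}` under scalar patched Markov embeddings:
the pullback of `A_{n+1}` by each `G_n^{α,σ}` equals `A_n`. -/
def InvariantSP
    (A : (n : ℕ) → (Fin (n + 1) → ℝ) → (Fin (n + 1) → ℝ) → (Fin (n + 1) → ℝ) → ℝ) : Prop :=
  ∀ n : ℕ, 0 < n → ∀ α ∈ Set.Ioo (0 : ℝ) 1, ∀ σ : Equiv.Perm (Fin (n + 2)),
    ∀ p ∈ Psim n, ∀ X ∈ Tang n, ∀ Y ∈ Tang n,
      A (n + 1) (sPatch n α σ p) (sPatchD n α σ X) (sPatchD n α σ Y) = A n p X Y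

/-- The vector field `Z_i^n` on `P_n`, with (constant) coordinates
`e_i - (1/(n+1)) ∑_j e_j`. -/
def Zvec (n : ℕ) (i : Fin (n + 1)) : Fin (n + 1) → ℝ :=
  fun k => (if k = i then 1 else 0) - 1 / (n + 1)

/-- The uniform probability measure `b_n ∈ P_n`. -/
def bunif (n : ℕ) : Fin (n + 1) → ℝ := fun _ => 1 / (n + 1)

/-- The point `p_u ∈ P_1`: `p_u(1) = u`, `p_u(2) = 1 - u`. -/
def pu (u : ℝ) : Fin 2 → ℝ := ![u, 1 - u]

/-- The tensor field `A_n^d(X,Y)_p = ∑_i X^i Y^i / p(i)²`. -/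
def Ad (n : ℕ) (p X Y : Fin (n + 1) → ℝ) : ℝ := ∑ i, X i * Y i / (p i) ^ 2

/-- The tensor field `A_n^s(X,Y)_p = (∑_i X^i/p(i)) (∑_j Y^j/p(j))`. -/
def As (n : ℕ) (p X Y : Fin (n + 1) → ℝ) : ℝ := (∑ i, X i / p i) * (∑ j, Y j / p j)

/-- The Fisher metric `g_n^F(X,Y)_p = ∑_i X^i Y^i / p(i)`. -/
def Fish (n : ℕ) (p X Y : Fin (n + 1) → ℝ) : ℝ := ∑ i, X i * Y i / p i

/-- The point `ψ_u^σ(α) = G_1^{α,σ}(p_u) ∈ P_2` (the indices `1,2,3` of `Ω_3`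
are `0,1,2 : Fin 3`). -/
def psiPt (α u : ℝ) (σ : Equiv.Perm (Fin 3)) : Fin 3 → ℝ := sPatch 1 α σ (pu u)

/-- `E^k ⊂ TP_2`: the line spanned by `Z_i^2 - Z_j^2 = e_i - e_j` where
`{i,j,k} = {0,1,2}`; equivalently, the sum-zero vectors vanishing at `k`. -/
def Esub (k : Fin 3) : Set (Fin 3 → ℝ) := {W | (∑ i, W i = 0) ∧ W k = 0}

/-- `u_α^{ij}` (formed with `σ = id`). -/
def uRatio (α u : ℝ) (i j : Fin 3) : ℝ :=
  psiPt α u (Equiv.refl (Fin 3)) i /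
    (psiPt α u (Equiv.refl (Fin 3)) i + psiPt α u (Equiv.refl (Fin 3)) j)

/-- The image `dH^{ij}_q(Z_1^1) = ((q(i)+q(j))/2) (Z_i^2 - Z_j^2)` of `Z_1^1`
under the differential of `H_q^{ij} : P_1 → P_2`. -/
def dHvec (q : Fin 3 → ℝ) (i j : Fin 3) : Fin 3 → ℝ :=
  ((q i + q j) / 2) • (Zvec 2 i - Zvec 2 j)

/-- Condition (C1) for `A_2`. -/
def CondC1 (A2 : (Fin 3 → ℝ) → (Fin 3 → ℝ) → (Fin 3 → ℝ) → ℝ) : Prop :=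
  ∃ r : ℝ → ℝ, (∀ t : ℝ, 0 < t → 0 < r t) ∧ (∀ t : ℝ, 0 < t → r t * r (1 / t) = 1) ∧
    ∀ α ∈ Set.Ioo (0 : ℝ) 1, ∀ u ∈ Set.Ioo (0 : ℝ) 1, ∀ σ : Equiv.Perm (Fin 3),
      ∀ W1 W2 W3 : Fin 3 → ℝ, W1 ∈ Esub (σ 0) → W2 ∈ Esub (σ 1) → W3 ∈ Esub (σ 2) →
        W3 = W1 + W2 →
        A2 (psiPt α u σ) W3 W1 = r (u / (1 - u)) * A2 (psiPt α u σ) W3 W2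

/-- Condition (C2) for `A_1` and `A_2`: `A_1` is positive semidefinite and
degenerate at `b_1`, and the parallelism identity holds. -/
def CondC2 (A1 : (Fin 2 → ℝ) → (Fin 2 → ℝ) → (Fin 2 → ℝ) → ℝ)
    (A2 : (Fin 3 → ℝ) → (Fin 3 → ℝ) → (Fin 3 → ℝ) → ℝ) : Prop :=
  (∀ p ∈ Psim 1, ∀ X ∈ Tang 1, 0 ≤ A1 p X X) ∧
  (∃ X ∈ Tang 1, X ≠ 0 ∧ ∀ Y ∈ Tang 1, A1 (bunif 1) X Y = 0) ∧
  (∀ α ∈ Set.Ioo (0 : ℝ) 1, ∀ u ∈ Set.Ioo (0 : ℝ) 1, ∀ σ : Equiv.Perm (Fin 3),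
    ∀ i j k l : Fin 3, i ≠ j → k ≠ l →
      A2 (psiPt α u σ) (dHvec (psiPt α u σ) (σ i) (σ j)) (dHvec (psiPt α u σ) (σ k) (σ l)) =
        (Real.sign (2 * uRatio α u i j - 1) *
            Real.sqrt (A1 (pu (uRatio α u i j)) (Zvec 1 0) (Zvec 1 0))) *
        (Real.sign (2 * uRatio α u k l - 1) *
            Real.sqrt (A1 (pu (uRatio α u k l)) (Zvec 1 0) (Zvec 1 0))))

/-- `H : P_m → P_n` (together with its linear differential `dH`) is a
composition of scalar patched Markov embeddings. -/
inductive IsSPMComp :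
    (m n : ℕ) → ((Fin (m + 1) → ℝ) → (Fin (n + 1) → ℝ)) →
      ((Fin (m + 1) → ℝ) → (Fin (n + 1) → ℝ)) → Prop
  | refl (m : ℕ) : IsSPMComp m m id id
  | step {m n : ℕ} {H dH : (Fin (m + 1) → ℝ) → (Fin (n + 1) → ℝ)} (α : ℝ)
      (hα : α ∈ Set.Ioo (0 : ℝ) 1) (σ : Equiv.Perm (Fin (n + 2)))
      (h : IsSPMComp m n H dH) :
      IsSPMComp m (n + 1) (fun p => sPatch n α σ (H p)) (fun X => sPatchD n α σ (dH X))

/-- `Q` is a Markov partition: each `Q i` is a probability measure on `Ω_{N+1}`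
and the supports of the `Q i` are pairwise disjoint with union `Ω_{N+1}`. -/
def IsMarkovPartition {n N : ℕ} (Q : Fin (n + 1) → Fin (N + 1) → ℝ) : Prop :=
  (∀ i, (∀ I, 0 ≤ Q i I) ∧ ∑ I, Q i I = 1) ∧ (∀ I, ∃! i, Q i I ≠ 0)

/-- The Markov embedding `F(p) = ∑_i p(i) Q_i` induced by `Q` (the same formula
gives its differential on tangent vectors). -/
def mEmb {n N : ℕ} (Q : Fin (n + 1) → Fin (N + 1) → ℝ) (p : Fin (n + 1) → ℝ) :
    Fin (N + 1) → ℝ := fun I => ∑ i, p i * Q i I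

/-- `A_n^{λ,μ} = λ A_n^d + μ A_n^s`. -/
def Alm (n : ℕ) (lam mu : ℝ) (p X Y : Fin (n + 1) → ℝ) : ℝ :=
  lam * Ad n p X Y + mu * As n p X Y
section AuxLemmas

lemma bilin_zero {n : ℕ} {B : (Fin (n + 1) → ℝ) → (Fin (n + 1) → ℝ) → ℝ}
    (h : IsSymmBilin B) (Y : Fin (n + 1) → ℝ) : B 0 Y = 0 := by
  have h2 := h.2 1 0 0 Y
  simp only [one_smul, add_zero, one_mul] at h2
  linarith

lemma bilin_smul {n : ℕ} {B : (Fin (n + 1) → ℝ) → (Fin (n + 1) → ℝ) → ℝ}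
    (h : IsSymmBilin B) (c : ℝ) (X Y : Fin (n + 1) → ℝ) :
    B (c • X) Y = c * B X Y := by
  have h2 := h.2 c X 0 Y
  rw [add_zero, bilin_zero h, add_zero] at h2
  exact h2

lemma bilin_smul₂ {n : ℕ} {B : (Fin (n + 1) → ℝ) → (Fin (n + 1) → ℝ) → ℝ}
    (h : IsSymmBilin B) (c d : ℝ) (X Y : Fin (n + 1) → ℝ) :
    B (c • X) (d • Y) = c * d * B X Y := by
  rw [bilin_smul h, h.1, bilin_smul h, h.1 Y X]; ring

lemma bilin_add {n : ℕ} {B : (Fin (n + 1) → ℝ) → (Fin (n + 1) → ℝ) → ℝ}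
    (h : IsSymmBilin B) (X Y Z : Fin (n + 1) → ℝ) :
    B (X + Y) Z = B X Z + B Y Z := by
  have h2 := h.2 1 X Y Z
  rwa [one_smul, one_mul] at h2

lemma pu_mem {u : ℝ} (hu : u ∈ Set.Ioo (0 : ℝ) 1) : pu u ∈ Psim 1 := by
  obtain ⟨h0, h1⟩ := hu
  constructor
  · intro i
    fin_cases i <;> simp [pu] <;> constructor <;> linarith
  · simp [pu, Fin.sum_univ_two]

/-- Table form of the point `sPatch 1 α σ (pu u)`. -/
lemma sPatch_table (α u : ℝ) (σ : Equiv.Perm (Fin 3)) :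
    sPatch 1 α σ (pu u) = fun I => ![α * u, α * (1 - u), 1 - α] (σ⁻¹ I) := by
  have key : ∀ j : Fin 3, sPatch 1 α σ (pu u) (σ j) = ![α * u, α * (1 - u), 1 - α] j := by
    intro j
    have hlast : Fin.last 2 = (2 : Fin 3) := rfl
    simp only [sPatch, Nat.reduceAdd, Fin.sum_univ_two, hlast]
    have h0 : (0 : Fin 2).castSucc = (0 : Fin 3) := rfl
    have h1 : (1 : Fin 2).castSucc = (1 : Fin 3) := rfl
    rw [h0, h1]
    fin_cases j <;>
      simp [pu, Equiv.apply_eq_iff_eq, (by decide : (0:Fin 3) ≠ 1), (by decide : (0:Fin 3) ≠ 2),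
        (by decide : (1:Fin 3) ≠ 0), (by decide : (1:Fin 3) ≠ 2),
        (by decide : (2:Fin 3) ≠ 0), (by decide : (2:Fin 3) ≠ 1)] <;> ring
  funext I
  have := key (σ⁻¹ I)
  rwa [Equiv.Perm.inv_def, Equiv.apply_symm_apply] at this

/-- Table form of `sPatchD 1 α τ ((c/α) • ![1,-1])`. -/
lemma sPatchD_table {α : ℝ} (hα : α ≠ 0) (c : ℝ) (τ : Equiv.Perm (Fin 3)) :
    sPatchD 1 α τ ((c / α) • ![(1:ℝ), -1]) = fun I => ![c, -c, 0] (τ⁻¹ I) := by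
  have key : ∀ j : Fin 3, sPatchD 1 α τ ((c / α) • ![(1:ℝ), -1]) (τ j) = ![c, -c, 0] j := by
    intro j
    simp only [sPatchD, Nat.reduceAdd, Fin.sum_univ_two]
    have h0 : (0 : Fin 2).castSucc = (0 : Fin 3) := rfl
    have h1 : (1 : Fin 2).castSucc = (1 : Fin 3) := rfl
    rw [h0, h1]
    fin_cases j <;>
      simp [Equiv.apply_eq_iff_eq, (by decide : (0:Fin 3) ≠ 1),
        (by decide : (1:Fin 3) ≠ 0), (by decide : (2:Fin 3) ≠ 0), (by decide : (2:Fin 3) ≠ 1)] <;>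
      field_simp
  funext I
  have := key (τ⁻¹ I)
  rwa [Equiv.Perm.inv_def, Equiv.apply_symm_apply] at this

/-- Pullback computation: `A 2` at a `ψ`-point on the line `e_{τ0} - e_{τ1}`. -/
lemma pull (A : (n : ℕ) → (Fin (n + 1) → ℝ) → (Fin (n + 1) → ℝ) → (Fin (n + 1) → ℝ) → ℝ)
    (hsymm : SymmTF A) (hinv : InvariantSP A)
    {α u : ℝ} (hα : α ∈ Set.Ioo (0 : ℝ) 1) (hu : u ∈ Set.Ioo (0 : ℝ) 1)
    (τ : Equiv.Perm (Fin 3)) (c d : ℝ) :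
    A 2 (fun I => ![α * u, α * (1 - u), 1 - α] (τ⁻¹ I))
        (fun I => ![c, -c, 0] (τ⁻¹ I)) (fun I => ![d, -d, 0] (τ⁻¹ I))
      = c * d / α ^ 2 * A 1 (pu u) ![1, -1] ![1, -1] := by
  have hα0 : α ≠ 0 := ne_of_gt hα.1
  have hZ : (![(1:ℝ), -1]) ∈ Tang 1 := by simp [Tang, Fin.sum_univ_two]
  have hX : ((c / α) • ![(1:ℝ), -1]) ∈ Tang 1 := by
    simp [Tang, Fin.sum_univ_two]
  have hY : ((d / α) • ![(1:ℝ), -1]) ∈ Tang 1 := by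
    simp [Tang, Fin.sum_univ_two]
  have hp := pu_mem hu
  have hI := hinv 1 one_pos α hα τ (pu u) hp _ hX _ hY
  rw [sPatch_table, sPatchD_table hα0 c, sPatchD_table hα0 d] at hI
  rw [hI, bilin_smul₂ (hsymm 1 one_pos (pu u) hp)]
  ring

end AuxLemmas

section AuxLemmas2

lemma bilin_expand {n : ℕ} {B : (Fin (n + 1) → ℝ) → (Fin (n + 1) → ℝ) → ℝ}
    (h : IsSymmBilin B) (X Y : Fin (n + 1) → ℝ) :
    B (X + Y) (X + Y) = B X X + B Y Y + 2 * B X Y := by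
  rw [bilin_add h, h.1 X (X + Y), h.1 Y (X + Y), bilin_add h, bilin_add h, h.1 Y X]
  ring

lemma bilin_expand' {n : ℕ} {B : (Fin (n + 1) → ℝ) → (Fin (n + 1) → ℝ) → ℝ}
    (h : IsSymmBilin B) (X Y : Fin (n + 1) → ℝ) :
    B (X + Y) X = B X X + B X Y := by
  rw [bilin_add h, h.1 Y X]

/-- Flexible-entries version of `pull`. -/
lemma pull' (A : (n : ℕ) → (Fin (n + 1) → ℝ) → (Fin (n + 1) → ℝ) → (Fin (n + 1) → ℝ) → ℝ)
    (hsymm : SymmTF A) (hinv : InvariantSP A)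
    {α u : ℝ} (hα : α ∈ Set.Ioo (0 : ℝ) 1) (hu : u ∈ Set.Ioo (0 : ℝ) 1)
    (τ : Equiv.Perm (Fin 3)) (c d x y z : ℝ)
    (hx : x = α * u) (hy : y = α * (1 - u)) (hz : z = 1 - α) :
    A 2 (fun I => ![x, y, z] (τ⁻¹ I))
        (fun I => ![c, -c, 0] (τ⁻¹ I)) (fun I => ![d, -d, 0] (τ⁻¹ I))
      = c * d / α ^ 2 * A 1 (pu u) ![1, -1] ![1, -1] := by
  subst hx hy hz
  exact pull A hsymm hinv hα hu τ c d

/-- Symmetry of `A_1(Z,Z)` under `u ↦ 1 - u`. -/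
lemma gsym (A : (n : ℕ) → (Fin (n + 1) → ℝ) → (Fin (n + 1) → ℝ) → (Fin (n + 1) → ℝ) → ℝ)
    (hsymm : SymmTF A) (hinv : InvariantSP A) {u : ℝ} (hu : u ∈ Set.Ioo (0 : ℝ) 1) :
    A 1 (pu u) ![1, -1] ![1, -1] = A 1 (pu (1 - u)) ![1, -1] ![1, -1] := by
  have hu' : (1 - u) ∈ Set.Ioo (0 : ℝ) 1 := ⟨by linarith [hu.2], by linarith [hu.1]⟩
  have hh : (1 / 2 : ℝ) ∈ Set.Ioo (0 : ℝ) 1 := by norm_num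
  have h1 := pull A hsymm hinv hh hu (1 : Equiv.Perm (Fin 3)) 1 1
  have h2 := pull' A hsymm hinv hh hu' (Equiv.swap 0 1) (-1) (-1)
      ((1 : ℝ) / 2 * (1 - u)) ((1 : ℝ) / 2 * u) (1 - 1 / 2)
      rfl (by ring) rfl
  have hpt : (fun I => ![(1 : ℝ) / 2 * (1 - u), 1 / 2 * u, 1 - 1 / 2] ((Equiv.swap 0 1)⁻¹ I))
      = (fun I => ![(1 : ℝ) / 2 * u, 1 / 2 * (1 - u), 1 - 1 / 2]
          ((1 : Equiv.Perm (Fin 3))⁻¹ I)) := by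
    funext I
    fin_cases I <;> simp [Equiv.swap_apply_def]
  have hvec : (fun I => ![(-1 : ℝ), -(-1), 0] ((Equiv.swap 0 1)⁻¹ I))
      = (fun I => ![(1 : ℝ), -1, 0] ((1 : Equiv.Perm (Fin 3))⁻¹ I)) := by
    funext I
    fin_cases I <;> simp [Equiv.swap_apply_def]
  rw [hpt, hvec] at h2
  have h12 := h1.symm.trans h2
  have hpow : ((1:ℝ)/2) ^ 2 = 1/4 := by norm_num
  rw [hpow] at h12
  norm_num at h12
  linarith

/-- Membership of a permuted-table point of `P_2`. -/
lemma table_mem {x y z : ℝ} (hx : x ∈ Set.Ioo (0:ℝ) 1) (hy : y ∈ Set.Ioo (0:ℝ) 1)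
    (hz : z ∈ Set.Ioo (0:ℝ) 1) (hs : x + y + z = 1) (σ : Equiv.Perm (Fin 3)) :
    (fun I => ![x, y, z] (σ⁻¹ I)) ∈ Psim 2 := by
  constructor
  · intro i
    show ![x, y, z] (σ⁻¹ i) ∈ Set.Ioo (0:ℝ) 1
    generalize σ⁻¹ i = j
    fin_cases j
    · simpa using hx
    · simpa using hy
    · simpa using hz
  · rw [Equiv.sum_comp σ⁻¹ (fun j => ![x, y, z] j), Fin.sum_univ_three]
    simpa

end AuxLemmas2

/-- The 3-cycle `0 ↦ 1 ↦ 2 ↦ 0` on `Fin 3`. -/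
def permRot : Equiv.Perm (Fin 3) := Equiv.swap 0 1 * Equiv.swap 1 2

/-- The transposition `1 ↔ 2` on `Fin 3`. -/
def permSw : Equiv.Perm (Fin 3) := Equiv.swap 1 2

lemma permRot_inv0 : permRot⁻¹ 0 = 2 := by decide
lemma permRot_inv1 : permRot⁻¹ 1 = 0 := by decide
lemma permRot_inv2 : permRot⁻¹ 2 = 1 := by decide
lemma permSw_inv0 : permSw⁻¹ 0 = 0 := by decide
lemma permSw_inv1 : permSw⁻¹ 1 = 2 := by decide
lemma permSw_inv2 : permSw⁻¹ 2 = 1 := by decide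

/-- For a family of symmetric `(0,2)`-tensor fields invariant under scalar
patched Markov embeddings:
`A_2(W_{σ(3)}, W_{σ(1)})_{ψ_u^σ(α)} = A_2(W_{σ(3)}, W_{σ(2)})_{ψ_{1-u}^σ(α)}`. -/
theorem A2_psi_symmetry
    (A : (n : ℕ) → (Fin (n + 1) → ℝ) → (Fin (n + 1) → ℝ) → (Fin (n + 1) → ℝ) → ℝ)
    (hsymm : SymmTF A) (hinv : InvariantSP A) :
    ∀ σ : Equiv.Perm (Fin 3), ∀ α ∈ Set.Ioo (0 : ℝ) 1, ∀ u ∈ Set.Ioo (0 : ℝ) 1,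
      ∀ W1 W2 W3 : Fin 3 → ℝ, W1 ∈ Esub (σ 0) → W2 ∈ Esub (σ 1) → W3 ∈ Esub (σ 2) →
        W3 = W1 + W2 →
        A 2 (psiPt α u σ) W3 W1 = A 2 (psiPt α (1 - u) σ) W3 W2 := by
  intro σ α hα u hu W1 W2 W3 hW1 hW2 hW3 hadd
  obtain ⟨hα0, hα1⟩ := hα
  obtain ⟨hu0, hu1⟩ := hu
  have hαI : α ∈ Set.Ioo (0:ℝ) 1 := ⟨hα0, hα1⟩
  have huI : u ∈ Set.Ioo (0:ℝ) 1 := ⟨hu0, hu1⟩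
  have hu' : (1 - u) ∈ Set.Ioo (0:ℝ) 1 := ⟨by linarith, by linarith⟩
  obtain ⟨r, hrdef⟩ : ∃ r, W3 (σ 0) = r := ⟨_, rfl⟩
  -- coordinates of W1, W2, W3 relative to σ
  have sum3 : ∀ W : Fin 3 → ℝ, ∑ i, W i = W (σ 0) + W (σ 1) + W (σ 2) := by
    intro W
    rw [← Equiv.sum_comp σ W, Fin.sum_univ_three]
  have s1 : W1 (σ 0) + W1 (σ 1) + W1 (σ 2) = 0 := by rw [← sum3]; exact hW1.1
  have s2 : W2 (σ 0) + W2 (σ 1) + W2 (σ 2) = 0 := by rw [← sum3]; exact hW2.1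
  have s3 : W3 (σ 0) + W3 (σ 1) + W3 (σ 2) = 0 := by rw [← sum3]; exact hW3.1
  have e1 : W1 (σ 0) = 0 := hW1.2
  have e2 : W2 (σ 1) = 0 := hW2.2
  have e3 : W3 (σ 2) = 0 := hW3.2
  have ad0 : W3 (σ 0) = W1 (σ 0) + W2 (σ 0) := by rw [hadd]; rfl
  have ad1 : W3 (σ 1) = W1 (σ 1) + W2 (σ 1) := by rw [hadd]; rfl
  have ad2 : W3 (σ 2) = W1 (σ 2) + W2 (σ 2) := by rw [hadd]; rfl
  -- table forms of the vectors
  have tab : ∀ (W t : Fin 3 → ℝ), (∀ j, W (σ j) = t j) → W = fun I => t (σ⁻¹ I) := by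
    intro W t h
    funext I
    have := h (σ⁻¹ I)
    rwa [Equiv.Perm.inv_def, Equiv.apply_symm_apply] at this
  have hW3t : W3 = fun I => ![r, -r, 0] (σ⁻¹ I) := by
    refine tab _ _ ?_
    intro j; fin_cases j <;> simp <;> linarith
  have hW1t : W1 = fun I => ![0, -r, r] (σ⁻¹ I) := by
    refine tab _ _ ?_
    intro j; fin_cases j <;> simp <;> linarith
  have hW2t : W2 = fun I => ![r, 0, -r] (σ⁻¹ I) := by
    refine tab _ _ ?_
    intro j; fin_cases j <;> simp <;> linarith
  -- table forms of the two base points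
  have hP : psiPt α u σ = fun I => ![α*u, α*(1-u), 1-α] (σ⁻¹ I) := sPatch_table α u σ
  have hP' : psiPt α (1-u) σ = fun I => ![α*(1-u), α*(1-(1-u)), 1-α] (σ⁻¹ I) :=
    sPatch_table α (1-u) σ
  -- memberships and bilinearity
  have hαu : α*u ∈ Set.Ioo (0:ℝ) 1 := ⟨by positivity, by nlinarith⟩
  have hα1u : α*(1-u) ∈ Set.Ioo (0:ℝ) 1 := ⟨by nlinarith, by nlinarith⟩
  have h1α : 1-α ∈ Set.Ioo (0:ℝ) 1 := ⟨by linarith, by linarith⟩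
  have hαu' : α*(1-(1-u)) ∈ Set.Ioo (0:ℝ) 1 := by
    rw [show (1-(1-u)) = u by ring]; exact hαu
  have hPm : psiPt α u σ ∈ Psim 2 := by
    rw [hP]; exact table_mem hαu hα1u h1α (by ring) σ
  have hP'm : psiPt α (1-u) σ ∈ Psim 2 := by
    rw [hP']; exact table_mem hα1u hαu' h1α (by ring) σ
  have hB : IsSymmBilin (A 2 (psiPt α u σ)) := hsymm 2 (by norm_num) _ hPm
  have hB' : IsSymmBilin (A 2 (psiPt α (1-u) σ)) := hsymm 2 (by norm_num) _ hP'm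
  -- auxiliary parameters β = 1 - αu, v = α(1-u)/β, γ = 1 - α(1-u), w = αu/γ
  have hβI : (1 - α*u) ∈ Set.Ioo (0:ℝ) 1 := ⟨by nlinarith, by nlinarith⟩
  have hβ0 : (1 - α*u) ≠ 0 := ne_of_gt hβI.1
  have hvI : (α*(1-u)/(1 - α*u)) ∈ Set.Ioo (0:ℝ) 1 := by
    constructor
    · exact div_pos (by nlinarith) hβI.1
    · rw [div_lt_one hβI.1]; nlinarith
  have hγI : (1 - α*(1-u)) ∈ Set.Ioo (0:ℝ) 1 := ⟨by nlinarith, by nlinarith⟩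
  have hγ0 : (1 - α*(1-u)) ≠ 0 := ne_of_gt hγI.1
  have hwI : (α*u/(1 - α*(1-u))) ∈ Set.Ioo (0:ℝ) 1 := by
    constructor
    · exact div_pos (by nlinarith) hγI.1
    · rw [div_lt_one hγI.1]; nlinarith
  have reindex : ∀ (ρ' : Equiv.Perm (Fin 3)) (f g : Fin 3 → ℝ), (∀ j, f (ρ'⁻¹ j) = g j) →
      (fun I => f ((σ * ρ')⁻¹ I)) = fun I => g (σ⁻¹ I) := by
    intro ρ' f g h
    funext I
    rw [mul_inv_rev, Equiv.Perm.mul_apply]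
    exact h _
  -- re-indexed table forms
  have hW1π : W1 = fun I => ![-r, -(-r), 0] ((σ * permRot)⁻¹ I) := by
    rw [hW1t]
    refine (reindex permRot _ _ ?_).symm
    intro j
    fin_cases j <;>
      simp [permRot_inv0, permRot_inv1, permRot_inv2] <;>
      ring
  have hW2ρ : W2 = fun I => ![r, -r, 0] ((σ * permSw)⁻¹ I) := by
    rw [hW2t]
    refine (reindex permSw _ _ ?_).symm
    intro j
    fin_cases j <;>
      simp [permSw_inv0, permSw_inv1, permSw_inv2] <;>
      ring
  have hPπ : psiPt α u σ = fun I =>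
      ![(1-α*u) * (α*(1-u)/(1-α*u)), (1-α*u) * (1 - α*(1-u)/(1-α*u)), 1-(1-α*u)]
        ((σ * permRot)⁻¹ I) := by
    rw [hP]
    refine (reindex permRot _ _ ?_).symm
    intro j
    fin_cases j <;>
      simp [permRot_inv0, permRot_inv1, permRot_inv2] <;>
      field_simp <;> ring_nf
  have hPρ : psiPt α u σ = fun I =>
      ![(1-α*(1-u)) * (α*u/(1-α*(1-u))), (1-α*(1-u)) * (1 - α*u/(1-α*(1-u))), 1-(1-α*(1-u))]
        ((σ * permSw)⁻¹ I) := by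
    rw [hP]
    refine (reindex permSw _ _ ?_).symm
    intro j
    fin_cases j <;>
      simp [permSw_inv0, permSw_inv1, permSw_inv2] <;>
      field_simp <;> ring_nf
  have hP'π : psiPt α (1-u) σ = fun I =>
      ![(1-α*(1-u)) * (α*u/(1-α*(1-u))), (1-α*(1-u)) * (1 - α*u/(1-α*(1-u))), 1-(1-α*(1-u))]
        ((σ * permRot)⁻¹ I) := by
    rw [hP']
    refine (reindex permRot _ _ ?_).symm
    intro j
    fin_cases j <;>
      simp [permRot_inv0, permRot_inv1, permRot_inv2] <;>
      field_simp <;> ring_nf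
  have hP'ρ : psiPt α (1-u) σ = fun I =>
      ![(1-α*u) * (α*(1-u)/(1-α*u)), (1-α*u) * (1 - α*(1-u)/(1-α*u)), 1-(1-α*u)]
        ((σ * permSw)⁻¹ I) := by
    rw [hP']
    refine (reindex permSw _ _ ?_).symm
    intro j
    fin_cases j <;>
      simp [permSw_inv0, permSw_inv1, permSw_inv2] <;>
      field_simp <;> ring_nf
  -- the six diagonal values
  have hc3 : A 2 (psiPt α u σ) W3 W3 = r*r/α^2 * A 1 (pu u) ![1,-1] ![1,-1] := by
    rw [hP, hW3t]
    exact pull' A hsymm hinv hαI huI σ r r _ _ _ rfl rfl rfl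
  have hc3' : A 2 (psiPt α (1-u) σ) W3 W3 = r*r/α^2 * A 1 (pu (1-u)) ![1,-1] ![1,-1] := by
    rw [hP', hW3t]
    exact pull' A hsymm hinv hαI hu' σ r r _ _ _ rfl rfl rfl
  have ha : A 2 (psiPt α u σ) W1 W1
      = r*r/(1-α*u)^2 * A 1 (pu (α*(1-u)/(1-α*u))) ![1,-1] ![1,-1] := by
    rw [hPπ, hW1π]
    have := pull' A hsymm hinv hβI hvI (σ * permRot) (-r) (-r) _ _ _ rfl rfl rfl
    rw [this]; ring
  have ha' : A 2 (psiPt α (1-u) σ) W1 W1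
      = r*r/(1-α*(1-u))^2 * A 1 (pu (α*u/(1-α*(1-u)))) ![1,-1] ![1,-1] := by
    rw [hP'π, hW1π]
    have := pull' A hsymm hinv hγI hwI (σ * permRot) (-r) (-r) _ _ _ rfl rfl rfl
    rw [this]; ring
  have hb : A 2 (psiPt α u σ) W2 W2
      = r*r/(1-α*(1-u))^2 * A 1 (pu (α*u/(1-α*(1-u)))) ![1,-1] ![1,-1] := by
    rw [hPρ, hW2ρ]
    have := pull' A hsymm hinv hγI hwI (σ * permSw) r r _ _ _ rfl rfl rfl
    rw [this]
  have hb' : A 2 (psiPt α (1-u) σ) W2 W2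
      = r*r/(1-α*u)^2 * A 1 (pu (α*(1-u)/(1-α*u))) ![1,-1] ![1,-1] := by
    rw [hP'ρ, hW2ρ]
    have := pull' A hsymm hinv hβI hvI (σ * permSw) r r _ _ _ rfl rfl rfl
    rw [this]
  -- the symmetry of A 1 and the resulting identities
  have hgs := gsym A hsymm hinv huI
  have hcc : A 2 (psiPt α u σ) W3 W3 = A 2 (psiPt α (1-u) σ) W3 W3 := by
    rw [hc3, hc3', hgs]
  have haa : A 2 (psiPt α u σ) W1 W1 = A 2 (psiPt α (1-u) σ) W2 W2 := by
    rw [ha, hb']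
  have hbb : A 2 (psiPt α u σ) W2 W2 = A 2 (psiPt α (1-u) σ) W1 W1 := by
    rw [hb, ha']
  -- bilinear expansions
  have hexp1 : A 2 (psiPt α u σ) W3 W1
      = A 2 (psiPt α u σ) W1 W1 + A 2 (psiPt α u σ) W1 W2 := by
    rw [hadd]; exact bilin_expand' hB W1 W2
  have hexp2 : A 2 (psiPt α u σ) W3 W3
      = A 2 (psiPt α u σ) W1 W1 + A 2 (psiPt α u σ) W2 W2
        + 2 * A 2 (psiPt α u σ) W1 W2 := by
    rw [hadd]; exact bilin_expand hB W1 W2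
  have hexp3 : A 2 (psiPt α (1-u) σ) W3 W2
      = A 2 (psiPt α (1-u) σ) W2 W2 + A 2 (psiPt α (1-u) σ) W2 W1 := by
    rw [hadd, add_comm W1 W2]; exact bilin_expand' hB' W2 W1
  have hexp4 : A 2 (psiPt α (1-u) σ) W3 W3
      = A 2 (psiPt α (1-u) σ) W1 W1 + A 2 (psiPt α (1-u) σ) W2 W2
        + 2 * A 2 (psiPt α (1-u) σ) W1 W2 := by
    rw [hadd]; exact bilin_expand hB' W1 W2
  have hsym' : A 2 (psiPt α (1-u) σ) W2 W1 = A 2 (psiPt α (1-u) σ) W1 W2 := hB'.1 _ _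
  linarith [hexp1, hexp2, hexp3, hexp4, hcc, haa, hbb, hsym']
end
end

section
/- For each n ∈ ℕ let A_n be a symmetric (0,2)-tensor field on P_n, and assume that for every n ∈ ℕ and each scalar patched Markov embedding G_n : P_n → P_{n+1}, the pullback of A_{n+1} by G_n equals A_n, and that A_2 satisfies condition (C1). Set λ := (1/2)·A_1(Z_1^1, Z_1^1)_{p_{1/2}}, W_1 := Z_3^2 − Z_2^2, W_2 := Z_1^2 − Z_3^2, W_3 := Z_1^2 − Z_2^2. Then for every q ∈ P_2, A_2(W_3, W_2)_q = λ/q(1)² and A_2(W_3, W_1)_q = λ/q(2)². -/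
open Finset

noncomputable section

section C1helpers

lemma bzero {n : ℕ} {B : (Fin (n+1) → ℝ) → (Fin (n+1) → ℝ) → ℝ}
    (hB : IsSymmBilin B) (Y : Fin (n+1) → ℝ) : B 0 Y = 0 := by
  have h := hB.2 1 0 0 Y
  simp only [one_smul, add_zero, one_mul] at h
  linarith

lemma bsmul {n : ℕ} {B : (Fin (n+1) → ℝ) → (Fin (n+1) → ℝ) → ℝ}
    (hB : IsSymmBilin B) (c : ℝ) (X Y : Fin (n+1) → ℝ) : B (c • X) Y = c * B X Y := by
  have h := hB.2 c X 0 Y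
  rw [add_zero, bzero hB] at h
  linarith

lemma badd {n : ℕ} {B : (Fin (n+1) → ℝ) → (Fin (n+1) → ℝ) → ℝ}
    (hB : IsSymmBilin B) (X X' Y : Fin (n+1) → ℝ) : B (X + X') Y = B X Y + B X' Y := by
  have h := hB.2 1 X X' Y
  rw [one_smul, one_mul] at h
  exact h

lemma badd' {n : ℕ} {B : (Fin (n+1) → ℝ) → (Fin (n+1) → ℝ) → ℝ}
    (hB : IsSymmBilin B) (X Y Y' : Fin (n+1) → ℝ) : B X (Y + Y') = B X Y + B X Y' := by
  rw [hB.1, badd hB, hB.1 Y X, hB.1 Y' X]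

lemma bneg2 {n : ℕ} {B : (Fin (n+1) → ℝ) → (Fin (n+1) → ℝ) → ℝ}
    (hB : IsSymmBilin B) (X Y : Fin (n+1) → ℝ) : B (-X) (-Y) = B X Y := by
  rw [← neg_one_smul ℝ X, ← neg_one_smul ℝ Y, bsmul hB, hB.1, bsmul hB, hB.1]
  ring

lemma sPatch_pu_apply (α u : ℝ) (σ : Equiv.Perm (Fin 3)) (I : Fin 3) :
    sPatch 1 α σ (pu u) I = α * u * (if σ 0 = I then 1 else 0)
      + α * (1-u) * (if σ 1 = I then 1 else 0) + (1-α) * (if σ 2 = I then 1 else 0) := by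
  have h0 : ((0 : Fin 2).castSucc : Fin 3) = 0 := rfl
  have h1 : ((1 : Fin 2).castSucc : Fin 3) = 1 := rfl
  have h2 : (Fin.last 2 : Fin 3) = 2 := rfl
  simp [sPatch, pu, Fin.sum_univ_two, h0, h1, h2]
  split_ifs <;> ring

lemma sum_perm3 (q : Fin 3 → ℝ) (σ : Equiv.Perm (Fin 3)) :
    q (σ 0) + q (σ 1) + q (σ 2) = ∑ i, q i := by
  rw [← Equiv.sum_comp σ q, Fin.sum_univ_three]

lemma psiPt_eq {q : Fin 3 → ℝ} (hq : q ∈ Psim 2) (σ : Equiv.Perm (Fin 3)) :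
    psiPt (q (σ 0) + q (σ 1)) (q (σ 0) / (q (σ 0) + q (σ 1))) σ = q := by
  have hpos : ∀ i, 0 < q i := fun i => (hq.1 i).1
  have hs : (0:ℝ) < q (σ 0) + q (σ 1) := add_pos (hpos _) (hpos _)
  have hsum : q (σ 0) + q (σ 1) + q (σ 2) = 1 := by rw [sum_perm3]; exact hq.2
  have hne : ∀ a b : Fin 3, a ≠ b → σ a ≠ σ b := fun a b hab h => hab (σ.injective h)
  have h3 : ∀ m : Fin 3, m = 0 ∨ m = 1 ∨ m = 2 := by decide
  funext I
  rw [psiPt, sPatch_pu_apply]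
  rcases h3 (σ.symm I) with h|h|h <;> rw [Equiv.symm_apply_eq] at h <;> rw [h]
  · rw [if_pos rfl, if_neg (hne 1 0 (by decide)), if_neg (hne 2 0 (by decide))]
    field_simp
    ring
  · rw [if_neg (hne 0 1 (by decide)), if_pos rfl, if_neg (hne 2 1 (by decide))]
    field_simp
    ring
  · rw [if_neg (hne 0 2 (by decide)), if_neg (hne 1 2 (by decide)), if_pos rfl]
    norm_num
    linarith

lemma sPatchD_Z (α : ℝ) (σ : Equiv.Perm (Fin 3)) :
    sPatchD 1 α σ (Zvec 1 0) = (α/2) • (Zvec 2 (σ 0) - Zvec 2 (σ 1)) := by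
  have h0 : ((0 : Fin 2).castSucc : Fin 3) = 0 := rfl
  have h1 : ((1 : Fin 2).castSucc : Fin 3) = 1 := rfl
  funext I
  simp only [sPatchD, Zvec, Fin.sum_univ_two, h0, h1, Pi.smul_apply, Pi.sub_apply,
    smul_eq_mul]
  have e0 : (I = σ 0) ↔ (σ 0 = I) := eq_comm
  have e1 : (I = σ 1) ↔ (σ 1 = I) := eq_comm
  simp only [e0, e1]
  by_cases ha : σ 0 = I <;> by_cases hb : σ 1 = I
  · exact absurd (σ.injective (ha.trans hb.symm)) (by decide)
  all_goals simp [ha, hb] <;> ring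

lemma Vmem {i j k : Fin 3} (hik : k ≠ i) (hjk : k ≠ j) : Zvec 2 i - Zvec 2 j ∈ Esub k := by
  constructor
  · fin_cases i <;> fin_cases j <;>
      norm_num [Fin.sum_univ_three, Zvec]
  · simp [Zvec, if_neg hik, if_neg hjk]

lemma ratio_arg {x y : ℝ} (hx : 0 < x) (hy : 0 < y) : (x/y)/(1+x/y) = x/(x+y) := by
  have h1 : (1:ℝ) + x/y ≠ 0 := by positivity
  have h2 : x + y ≠ 0 := by positivity
  rw [div_eq_div_iff h1 h2]
  field_simp
  ring

lemma alg (F R x y Q : ℝ) (hx : 0 < x) (hy : 0 < y) (hR : 0 < R)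
    (h : (1 + R) * Q = 4 * F / (x + y)^2) :
    Q = 4 * (F * (x/y)^2 / ((1 + R) * (1 + x/y)^2)) / x^2 := by
  have hxy : x + y ≠ 0 := by positivity
  have hR1 : (1:ℝ) + R ≠ 0 := by positivity
  have h2 : Q = 4 * F / (x + y)^2 / (1 + R) := by
    field_simp at h ⊢
    linarith
  rw [h2]
  field_simp
  ring

lemma ratio_uu {x y : ℝ} (hx : 0 < x) (hy : 0 < y) :
    x / (x + y) / (1 - x / (x + y)) = x / y := by
  have hxy : (0:ℝ) < x + y := by positivity
  have hlt : x / (x + y) < 1 := by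
    rw [div_lt_one hxy]; linarith
  have h1 : (0:ℝ) < 1 - x / (x + y) := by linarith
  rw [div_eq_div_iff (ne_of_gt h1) (ne_of_gt hy)]
  field_simp
  ring

end C1helpers

/-- Under invariance and condition (C1), with `λ = (1/2) A_1(Z_1^1,Z_1^1)_{p_{1/2}}`
and `W_1 = Z_3^2 - Z_2^2`, `W_2 = Z_1^2 - Z_3^2`, `W_3 = Z_1^2 - Z_2^2`:
`A_2(W_3, W_2)_q = λ/q(1)²` and `A_2(W_3, W_1)_q = λ/q(2)²` for all `q ∈ P_2`. -/
theorem A2_formula_C1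
    (A : (n : ℕ) → (Fin (n + 1) → ℝ) → (Fin (n + 1) → ℝ) → (Fin (n + 1) → ℝ) → ℝ)
    (hsymm : SymmTF A) (hinv : InvariantSP A) (hC1 : CondC1 (A 2))
    (lam : ℝ) (hlam : lam = A 1 (pu (1 / 2)) (Zvec 1 0) (Zvec 1 0) / 2) :
    ∀ q ∈ Psim 2,
      A 2 q (Zvec 2 0 - Zvec 2 1) (Zvec 2 0 - Zvec 2 2) = lam / (q 0) ^ 2 ∧
      A 2 q (Zvec 2 0 - Zvec 2 1) (Zvec 2 2 - Zvec 2 1) = lam / (q 1) ^ 2 := by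
  obtain ⟨r, hrpos, hrinv, hrC1⟩ := hC1
  have hZ1 : Zvec 1 0 ∈ Tang 1 := by
    simp [Tang, Zvec, Fin.sum_univ_two]
    norm_num
  have hpu : ∀ u ∈ Set.Ioo (0:ℝ) 1, pu u ∈ Psim 1 := by
    rintro u ⟨h0, h1⟩
    constructor
    · intro i
      fin_cases i <;> constructor <;> simp [pu] <;> linarith
    · simp [pu, Fin.sum_univ_two]
  have hparam : ∀ q ∈ Psim 2, ∀ σ : Equiv.Perm (Fin 3),
      q (σ 0) + q (σ 1) ∈ Set.Ioo (0:ℝ) 1 ∧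
      q (σ 0) / (q (σ 0) + q (σ 1)) ∈ Set.Ioo (0:ℝ) 1 := by
    intro q hq σ
    have hpos : ∀ i, 0 < q i := fun i => (hq.1 i).1
    have hsum : q (σ 0) + q (σ 1) + q (σ 2) = 1 := by rw [sum_perm3]; exact hq.2
    have hs : (0:ℝ) < q (σ 0) + q (σ 1) := add_pos (hpos _) (hpos _)
    refine ⟨⟨hs, by linarith [hpos (σ 2)]⟩, ⟨div_pos (hpos _) hs, ?_⟩⟩
    rw [div_lt_one hs]
    linarith [hpos (σ 1)]
  -- diagonal values of A 2 via invariance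
  have diag : ∀ q ∈ Psim 2, ∀ σ : Equiv.Perm (Fin 3),
      A 2 q (Zvec 2 (σ 0) - Zvec 2 (σ 1)) (Zvec 2 (σ 0) - Zvec 2 (σ 1)) =
        4 * A 1 (pu (q (σ 0) / (q (σ 0) + q (σ 1)))) (Zvec 1 0) (Zvec 1 0)
          / (q (σ 0) + q (σ 1))^2 := by
    intro q hq σ
    obtain ⟨hα, hu⟩ := hparam q hq σ
    have hB : IsSymmBilin (A 2 q) := hsymm 2 (by norm_num) q hq
    have key := hinv 1 (by norm_num) _ hα σ
      (pu (q (σ 0) / (q (σ 0) + q (σ 1)))) (hpu _ hu) (Zvec 1 0) hZ1 (Zvec 1 0) hZ1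
    rw [show sPatch 1 (q (σ 0) + q (σ 1)) σ (pu (q (σ 0) / (q (σ 0) + q (σ 1)))) = q
        from psiPt_eq hq σ, sPatchD_Z] at key
    have key' : A 2 q
        (((q (σ 0) + q (σ 1))/2) • (Zvec 2 (σ 0) - Zvec 2 (σ 1)))
        (((q (σ 0) + q (σ 1))/2) • (Zvec 2 (σ 0) - Zvec 2 (σ 1)))
        = A 1 (pu (q (σ 0) / (q (σ 0) + q (σ 1)))) (Zvec 1 0) (Zvec 1 0) := key
    rw [bsmul hB, hB.1, bsmul hB, hB.1] at key'
    have hα0 : q (σ 0) + q (σ 1) ≠ 0 := ne_of_gt hα.1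
    rw [eq_div_iff (pow_ne_zero 2 hα0)]
    linear_combination (4:ℝ) * key'
  -- condition (C1) transported to an arbitrary point of P_2
  have c1q : ∀ q ∈ Psim 2, ∀ σ : Equiv.Perm (Fin 3), ∀ W1 W2 W3 : Fin 3 → ℝ,
      W1 ∈ Esub (σ 0) → W2 ∈ Esub (σ 1) → W3 ∈ Esub (σ 2) → W3 = W1 + W2 →
      A 2 q W3 W1 = r (q (σ 0) / q (σ 1)) * A 2 q W3 W2 := by
    intro q hq σ W1 W2 W3 h1 h2 h3 h12
    obtain ⟨hα, hu⟩ := hparam q hq σ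
    have hkey := hrC1 _ hα _ hu σ W1 W2 W3 h1 h2 h3 h12
    rw [psiPt_eq hq σ] at hkey
    have hpos : ∀ i, 0 < q i := fun i => (hq.1 i).1
    rw [ratio_uu (hpos (σ 0)) (hpos (σ 1))] at hkey
    exact hkey
  -- the function Ψ
  set Psi : ℝ → ℝ := fun t =>
    A 1 (pu (t/(1+t))) (Zvec 1 0) (Zvec 1 0) * t^2 / ((1 + r t) * (1+t)^2) with hPsi
  -- the three formulas at an arbitrary point
  have key3 : ∀ q ∈ Psim 2,
      A 2 q (Zvec 2 0 - Zvec 2 1) (Zvec 2 0 - Zvec 2 2)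
        = 4 * Psi (q 0 / q 1) / (q 0)^2 ∧
      A 2 q (Zvec 2 0 - Zvec 2 1) (Zvec 2 0 - Zvec 2 2)
        = 4 * Psi (q 0 / q 2) / (q 0)^2 ∧
      A 2 q (Zvec 2 0 - Zvec 2 1) (Zvec 2 2 - Zvec 2 1)
        = 4 * Psi (q 1 / q 2) / (q 1)^2 := by
    intro q hq
    have hB : IsSymmBilin (A 2 q) := hsymm 2 (by norm_num) q hq
    have hpos : ∀ i, 0 < q i := fun i => (hq.1 i).1
    -- vector identities
    have i1 : Zvec 2 0 - Zvec 2 1 = (Zvec 2 2 - Zvec 2 1) + (Zvec 2 0 - Zvec 2 2) := by abel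
    have i2 : Zvec 2 0 - Zvec 2 2 = (Zvec 2 1 - Zvec 2 2) + (Zvec 2 0 - Zvec 2 1) := by abel
    have i3 : Zvec 2 1 - Zvec 2 2 = (Zvec 2 0 - Zvec 2 2) + (Zvec 2 1 - Zvec 2 0) := by abel
    have i4 : Zvec 2 1 - Zvec 2 2 = -(Zvec 2 2 - Zvec 2 1) := by abel
    have i5 : Zvec 2 1 - Zvec 2 0 = -(Zvec 2 0 - Zvec 2 1) := by abel
    -- C1 equations
    have EqA := c1q q hq (Equiv.refl (Fin 3))
      (Zvec 2 2 - Zvec 2 1) (Zvec 2 0 - Zvec 2 2) (Zvec 2 0 - Zvec 2 1)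
      (Vmem (by decide) (by decide)) (Vmem (by decide) (by decide))
      (Vmem (by decide) (by decide)) i1
    simp only [Equiv.refl_apply] at EqA
    have hB0 : (finRotate 3) (0 : Fin 3) = 1 := by decide
    have hB1 : (finRotate 3) (1 : Fin 3) = 2 := by decide
    have hB2 : (finRotate 3) (2 : Fin 3) = 0 := by decide
    have EqB := c1q q hq (finRotate 3)
      (Zvec 2 0 - Zvec 2 2) (Zvec 2 1 - Zvec 2 0) (Zvec 2 1 - Zvec 2 2)
      (by rw [hB0]; exact Vmem (by decide) (by decide))
      (by rw [hB1]; exact Vmem (by decide) (by decide))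
      (by rw [hB2]; exact Vmem (by decide) (by decide)) i3
    rw [hB0, hB1] at EqB
    have hC0 : (Equiv.swap (1 : Fin 3) 2) 0 = 0 := by decide
    have hC1' : (Equiv.swap (1 : Fin 3) 2) 1 = 2 := by decide
    have hC2' : (Equiv.swap (1 : Fin 3) 2) 2 = 1 := by decide
    have EqC := c1q q hq (Equiv.swap (1 : Fin 3) 2)
      (Zvec 2 1 - Zvec 2 2) (Zvec 2 0 - Zvec 2 1) (Zvec 2 0 - Zvec 2 2)
      (by rw [hC0]; exact Vmem (by decide) (by decide))
      (by rw [hC1']; exact Vmem (by decide) (by decide))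
      (by rw [hC2']; exact Vmem (by decide) (by decide)) i2
    rw [hC0, hC1'] at EqC
    -- bilinear expansions
    have hD01 := badd' hB (Zvec 2 0 - Zvec 2 1) (Zvec 2 2 - Zvec 2 1) (Zvec 2 0 - Zvec 2 2)
    rw [← i1] at hD01
    have hD02 := badd' hB (Zvec 2 0 - Zvec 2 2) (Zvec 2 1 - Zvec 2 2) (Zvec 2 0 - Zvec 2 1)
    rw [← i2] at hD02
    have hD12 := badd' hB (Zvec 2 1 - Zvec 2 2) (Zvec 2 0 - Zvec 2 2) (Zvec 2 1 - Zvec 2 0)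
    rw [← i3] at hD12
    have s1 : A 2 q (Zvec 2 1 - Zvec 2 2) (Zvec 2 0 - Zvec 2 2)
        = A 2 q (Zvec 2 0 - Zvec 2 2) (Zvec 2 1 - Zvec 2 2) := hB.1 _ _
    have s2 : A 2 q (Zvec 2 0 - Zvec 2 2) (Zvec 2 0 - Zvec 2 1)
        = A 2 q (Zvec 2 0 - Zvec 2 1) (Zvec 2 0 - Zvec 2 2) := hB.1 _ _
    have s3 : A 2 q (Zvec 2 1 - Zvec 2 2) (Zvec 2 1 - Zvec 2 0)
        = A 2 q (Zvec 2 0 - Zvec 2 1) (Zvec 2 2 - Zvec 2 1) := by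
      rw [i4, i5, bneg2 hB]
      exact hB.1 _ _
    -- diagonal values
    have dA := diag q hq (Equiv.refl (Fin 3))
    simp only [Equiv.refl_apply] at dA
    have dB := diag q hq (finRotate 3)
    rw [hB0, hB1] at dB
    have dC := diag q hq (Equiv.swap (1 : Fin 3) 2)
    rw [hC0, hC1'] at dC
    -- assemble the three linear relations
    have eq1 : (1 + r (q 0 / q 1)) * A 2 q (Zvec 2 0 - Zvec 2 1) (Zvec 2 0 - Zvec 2 2)
        = A 2 q (Zvec 2 0 - Zvec 2 1) (Zvec 2 0 - Zvec 2 1) := by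
      rw [hD01, EqA]; ring
    have eq2 : (1 + r (q 0 / q 2)) * A 2 q (Zvec 2 0 - Zvec 2 1) (Zvec 2 0 - Zvec 2 2)
        = A 2 q (Zvec 2 0 - Zvec 2 2) (Zvec 2 0 - Zvec 2 2) := by
      rw [hD02, EqC, s2]; ring
    have eq3 : (1 + r (q 1 / q 2)) * A 2 q (Zvec 2 0 - Zvec 2 1) (Zvec 2 2 - Zvec 2 1)
        = A 2 q (Zvec 2 1 - Zvec 2 2) (Zvec 2 1 - Zvec 2 2) := by
      rw [hD12, EqB, s3]; ring
    -- conclude via the algebraic lemma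
    have hra : 0 < r (q 0 / q 1) := hrpos _ (div_pos (hpos 0) (hpos 1))
    have hrb : 0 < r (q 1 / q 2) := hrpos _ (div_pos (hpos 1) (hpos 2))
    have hrc : 0 < r (q 0 / q 2) := hrpos _ (div_pos (hpos 0) (hpos 2))
    refine ⟨?_, ?_, ?_⟩
    · have halg := alg (A 1 (pu (q 0 / (q 0 + q 1))) (Zvec 1 0) (Zvec 1 0))
        (r (q 0 / q 1)) (q 0) (q 1)
        (A 2 q (Zvec 2 0 - Zvec 2 1) (Zvec 2 0 - Zvec 2 2))
        (hpos 0) (hpos 1) hra (by rw [eq1, dA])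
      simp only [hPsi]
      rw [ratio_arg (hpos 0) (hpos 1)]
      exact halg
    · have halg := alg (A 1 (pu (q 0 / (q 0 + q 2))) (Zvec 1 0) (Zvec 1 0))
        (r (q 0 / q 2)) (q 0) (q 2)
        (A 2 q (Zvec 2 0 - Zvec 2 1) (Zvec 2 0 - Zvec 2 2))
        (hpos 0) (hpos 2) hrc (by rw [eq2, dC])
      simp only [hPsi]
      rw [ratio_arg (hpos 0) (hpos 2)]
      exact halg
    · have halg := alg (A 1 (pu (q 1 / (q 1 + q 2))) (Zvec 1 0) (Zvec 1 0))
        (r (q 1 / q 2)) (q 1) (q 2)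
        (A 2 q (Zvec 2 0 - Zvec 2 1) (Zvec 2 2 - Zvec 2 1))
        (hpos 1) (hpos 2) hrb (by rw [eq3, dB])
      simp only [hPsi]
      rw [ratio_arg (hpos 1) (hpos 2)]
      exact halg
  -- Psi is constant on (0, ∞)
  have const : ∀ s t : ℝ, 0 < s → 0 < t → Psi s = Psi t := by
    intro s t hs ht
    have hc0 : (0:ℝ) < s*t + t + s := by positivity
    have hcne : s*t + t + s ≠ 0 := ne_of_gt hc0
    set q : Fin 3 → ℝ := fun k => (![s*t, t, s] : Fin 3 → ℝ) k / (s*t + t + s) with hqdef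
    have hq0 : q 0 = s*t/(s*t+t+s) := by simp [hqdef]
    have hq1 : q 1 = t/(s*t+t+s) := by simp [hqdef]
    have hq2 : q 2 = s/(s*t+t+s) := by simp [hqdef]
    have h3 : ∀ m : Fin 3, m = 0 ∨ m = 1 ∨ m = 2 := by decide
    have hmem : q ∈ Psim 2 := by
      constructor
      · intro i
        rcases h3 i with h|h|h <;> rw [h]
        · rw [hq0]
          constructor
          · positivity
          · rw [div_lt_one hc0]; nlinarith
        · rw [hq1]
          constructor
          · positivity
          · rw [div_lt_one hc0]; nlinarith
        · rw [hq2]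
          constructor
          · positivity
          · rw [div_lt_one hc0]; nlinarith
      · rw [Fin.sum_univ_three, hq0, hq1, hq2]
        field_simp
    have r01 : q 0 / q 1 = s := by
      rw [hq0, hq1, div_div_div_cancel_right₀ hcne, mul_div_assoc, div_self (ne_of_gt ht),
        mul_one]
    have r02 : q 0 / q 2 = t := by
      rw [hq0, hq2, div_div_div_cancel_right₀ hcne, mul_comm, mul_div_assoc,
        div_self (ne_of_gt hs), mul_one]
    obtain ⟨k1, k2, _⟩ := key3 q hmem
    have hq0ne : q 0 ≠ 0 := by rw [hq0]; positivity
    have heq : 4 * Psi s / (q 0)^2 = 4 * Psi t / (q 0)^2 := by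
      rw [← r01, ← r02, ← k1, ← k2]
    field_simp at heq
    linarith
  -- conclude
  have hr1 : r 1 = 1 := by
    have h := hrinv 1 one_pos
    rw [one_div_one] at h
    have h2 := hrpos 1 one_pos
    nlinarith
  have hPsi1 : Psi 1 = lam / 4 := by
    rw [hlam]
    simp only [hPsi]
    rw [hr1]
    norm_num
    ring
  intro q hq
  have hpos : ∀ i, 0 < q i := fun i => (hq.1 i).1
  obtain ⟨k1, _, k3⟩ := key3 q hq
  have h1 : q 0 ≠ 0 := ne_of_gt (hpos 0)
  have h2 : q 1 ≠ 0 := ne_of_gt (hpos 1)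
  constructor
  · rw [k1, const (q 0 / q 1) 1 (div_pos (hpos 0) (hpos 1)) one_pos, hPsi1]
    ring
  · rw [k3, const (q 1 / q 2) 1 (div_pos (hpos 1) (hpos 2)) one_pos, hPsi1]
    ring
end
end
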